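/- Let V be a finite-dimensional real vector space and g ⊆ gl(V). Suppose R : V × V* → g is a bilinear map such that, extending R to (V ⊕ V*)² by R|_{V×V} = 0, R|_{V*×V*} = 0 and antisymmetry, the extension satisfies the first Bianchi identity for the action of g on V ⊕ V* (with A ∈ g acting by (Ax, -u∘A)). Then the tensor r defined by r(x, y, z', t') := t'(R(x,z')y) for x,y ∈ V and z',t' ∈ V* is symmetric in (x,y) and symmetric in (z',t'); that is, r ∈ S²(V*) ⊗ S²(V). -/

import Mathlib

attribute [local instance 100] LieRing.ofAssociativeRing

theorem stmt_5 (V : Type*) [AddCommGroup V] [Module ℝ V] [FiniteDimensional ℝ V]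
    (g : LieSubalgebra ℝ (Module.End ℝ V))
    (R : V →ₗ[ℝ] Module.Dual ℝ V →ₗ[ℝ] Module.End ℝ V)
    (hval : ∀ x u, R x u ∈ g)
    (hBianchi : ∀ a b c : V × Module.Dual ℝ V,
      (((R a.1 b.2 - R b.1 a.2) c.1, -(c.2.comp (R a.1 b.2 - R b.1 a.2))) :
        V × Module.Dual ℝ V)
      + ((R b.1 c.2 - R c.1 b.2) a.1, -(a.2.comp (R b.1 c.2 - R c.1 b.2)))
      + ((R c.1 a.2 - R a.1 c.2) b.1, -(b.2.comp (R c.1 a.2 - R a.1 c.2))) = 0) :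
    (∀ (x y : V) (z' t' : Module.Dual ℝ V), t' (R x z' y) = t' (R y z' x)) ∧
    (∀ (x y : V) (z' t' : Module.Dual ℝ V), t' (R x z' y) = z' (R x t' y)) := by
  constructor
  · intro x y z' t'
    have h := hBianchi (x, 0) (y, 0) (0, z')
    have h1 := congrArg Prod.fst h
    simp only [Prod.fst_add, map_zero, LinearMap.zero_apply, Prod.fst_zero] at h1
    have h1' : R y z' x + -(R x z' y) = 0 := by
      simpa using h1
    have hxy : R y z' x = R x z' y := by
      have := add_neg_eq_zero.mp h1'
      exact this
    rw [hxy]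
  · intro x y z' t'
    have h := hBianchi (x, 0) (0, z') (0, t')
    have h2 := congrArg Prod.snd h
    simp only [Prod.snd_add, map_zero, Prod.snd_zero] at h2
    have h3 := congrArg (fun f : Module.Dual ℝ V => f y) h2
    have h4 : -(t' (R x z' y)) + z' (R x t' y) = 0 := by
      simpa [LinearMap.comp_apply] using h3
    linarith
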